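/- Let n > 0, 0 < ε < 1/4, and let 𝓔 be a finite Boolean subalgebra of the Borel sets of 2^ℕ such that for every A ∈ 𝓔 and every atom V of 𝓐_n either λ(A ∩ V) ≤ ελ(V)/n or λ(V \ A) ≤ ελ(V)/n. Define τ: 𝓔 → 𝓐_n by τ(A) = union of all atoms V of 𝓐_n with λ(V \ A) ≤ ελ(V)/n. Then τ is a Boolean algebra homomorphism (preserving ∅, 2^ℕ, complements, and unions) and λ(A △ τ(A)) ≤ ε/n for every A ∈ 𝓔. -/

import Mathlib

open MeasureTheory Set Filter

noncomputable section

/-- The Cantor space `2^ℕ`, realized as the compact group `(ℤ/2)^ℕ`. -/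
abbrev Cantor : Type := ℕ → ZMod 2

/-- The standard product (Haar) probability measure `λ` on `2^ℕ`. -/
def lam : Measure Cantor := Measure.addHaarMeasure ⊤

/-- `V m i = {x ∈ 2^ℕ : x m = i}`. -/
def V (m : ℕ) (i : ZMod 2) : Set Cantor := {x | x m = i}

/-- `φ_m(A) = |λ(A ∩ V_m^0) − λ(A ∩ V_m^1)|`. -/
def phi (m : ℕ) (A : Set Cantor) : ℝ :=
  |(lam (A ∩ V m 0)).toReal - (lam (A ∩ V m 1)).toReal|

/-- `ψ_m(A,B)`. -/
def psi (m : ℕ) (A B : Set Cantor) : ℝ :=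
  |((lam (A ∩ V m 0)).toReal - (lam (A ∩ V m 1)).toReal) -
   ((lam (B ∩ V m 0)).toReal - (lam (B ∩ V m 1)).toReal)|

/-- `U` is an atom of the algebra `𝓐_n` generated by coordinates `0,…,n`:
a basic cylinder determined by the first `n+1` coordinates. -/
def IsAtomOf (n : ℕ) (U : Set Cantor) : Prop :=
  ∃ σ : Fin (n + 1) → ZMod 2, U = {x | ∀ i : Fin (n + 1), x i = σ i}

/-- Membership in the algebra `𝓐_n`: the set depends only on coordinates `0,…,n`. -/
def MemA (n : ℕ) (S : Set Cantor) : Prop :=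
  ∃ T : Set (Fin (n + 1) → ZMod 2), S = {x | (fun i : Fin (n + 1) => x i) ∈ T}

/-- `B` is a Boolean subalgebra of `Bor(2^ℕ)`. -/
def IsBorelSubalgebra (B : Set (Set Cantor)) : Prop :=
  (∀ A ∈ B, MeasurableSet A) ∧ univ ∈ B ∧ (∀ A ∈ B, Aᶜ ∈ B) ∧
    (∀ A ∈ B, ∀ C ∈ B, A ∪ C ∈ B)

/-- `B` contains `Clopen(2^ℕ)`. -/
def ContainsClopen (B : Set (Set Cantor)) : Prop :=
  ∀ A : Set Cantor, IsClopen A → A ∈ B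

/-- Property (T) of a subalgebra of `Bor(2^ℕ)`. -/
def HasPropT (B : Set (Set Cantor)) : Prop :=
  ∀ (p : ℕ) (A : Fin p → Set Cantor), (∀ i, A i ∈ B) → ∀ ε : ℝ, 0 < ε →
    ∃ n : ℕ, 0 < n ∧ ∀ U : Set Cantor, IsAtomOf n U → ∀ i : Fin p,
      ((lam (A i ∩ U)).toReal ≤ ε * (lam U).toReal / n ∨
        (lam (U \ A i)).toReal ≤ ε * (lam U).toReal / n) ∧
      ∀ m : ℕ, n < m → phi m (A i ∩ U) ≤ ε * (lam U).toReal / m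

/-- The map `τ` sending a set `A` to the union of all atoms `V` of `𝓐_n`
with `λ(V \ A) ≤ ελ(V)/n`. -/
def tau (n : ℕ) (ε : ℝ) (A : Set Cantor) : Set Cantor :=
  ⋃₀ {V' : Set Cantor | IsAtomOf n V' ∧ (lam (V' \ A)).toReal ≤ ε * (lam V').toReal / n}

namespace Aux

theorem lam_univ : lam univ = 1 := by
  rw [lam, ← TopologicalSpace.PositiveCompacts.coe_top]
  exact MeasureTheory.Measure.addHaarMeasure_self

instance : lam.IsAddHaarMeasure := by rw [lam]; infer_instance
instance : IsFiniteMeasure lam := ⟨by rw [lam_univ]; exact ENNReal.one_lt_top⟩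

/-- basic cylinder -/
def C (n : ℕ) (σ : Fin (n + 1) → ZMod 2) : Set Cantor :=
  {x | ∀ i : Fin (n + 1), x i = σ i}

theorem atom_C (n : ℕ) (σ : Fin (n + 1) → ZMod 2) : IsAtomOf n (C n σ) := ⟨σ, rfl⟩

theorem C_isOpen (n : ℕ) (σ : Fin (n + 1) → ZMod 2) : IsOpen (C n σ) := by
  have : C n σ = ⋂ i : Fin (n + 1), (fun x : Cantor => x i) ⁻¹' {σ i} := by
    ext x; simp [C]
  rw [this]
  exact isOpen_iInter_of_finite fun i =>
    (isOpen_discrete _).preimage (continuous_apply (i : ℕ))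

theorem C_meas (n : ℕ) (σ : Fin (n + 1) → ZMod 2) : MeasurableSet (C n σ) :=
  (C_isOpen n σ).measurableSet

theorem C_nonempty (n : ℕ) (σ : Fin (n + 1) → ZMod 2) : (C n σ).Nonempty := by
  refine ⟨fun m => if h : m < n + 1 then σ ⟨m, h⟩ else 0, fun i => ?_⟩
  simp [i.isLt]

theorem C_pos (n : ℕ) (σ : Fin (n + 1) → ZMod 2) : 0 < (lam (C n σ)).toReal := by
  have h0 : lam (C n σ) ≠ 0 := ((C_isOpen n σ).measure_ne_zero lam (C_nonempty n σ))
  have h1 : lam (C n σ) ≠ ⊤ := measure_ne_top _ _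
  exact ENNReal.toReal_pos h0 h1

theorem C_eq {n : ℕ} {σ σ' : Fin (n + 1) → ZMod 2} {x : Cantor}
    (h : x ∈ C n σ) (h' : x ∈ C n σ') : σ = σ' :=
  funext fun i => (h i).symm.trans (h' i)

theorem mem_C_self (n : ℕ) (x : Cantor) : x ∈ C n (fun i => x i) := fun _ => rfl

theorem C_cover (n : ℕ) : ⋃ σ : Fin (n + 1) → ZMod 2, C n σ = univ :=
  eq_univ_of_forall fun x => mem_iUnion.2 ⟨fun i => x i, mem_C_self n x⟩

/-- additivity over an atom -/
theorem split_add {A : Set Cantor} (hA : MeasurableSet A) (S : Set Cantor) :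
    (lam (A ∩ S)).toReal + (lam (S \ A)).toReal = (lam S).toReal := by
  rw [← ENNReal.toReal_add (measure_ne_top _ _) (measure_ne_top _ _), inter_comm,
    measure_inter_add_diff S hA]

theorem mem_tau {n : ℕ} {ε : ℝ} {A : Set Cantor} {x : Cantor} :
    x ∈ tau n ε A ↔
    ∃ σ, x ∈ C n σ ∧ (lam (C n σ \ A)).toReal ≤ ε * (lam (C n σ)).toReal / n := by
  constructor
  · rintro ⟨U, ⟨⟨σ, rfl⟩, h⟩, hx⟩
    exact ⟨σ, hx, h⟩
  · rintro ⟨σ, hx, h⟩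
    exact ⟨C n σ, ⟨atom_C n σ, h⟩, hx⟩

theorem lam_sum (n : ℕ) :
    ∑ σ : Fin (n + 1) → ZMod 2, (lam (C n σ)).toReal = 1 := by
  have hd : Pairwise (Function.onFun Disjoint (C n)) := by
    intro σ σ' hne
    rw [Function.onFun, Set.disjoint_left]
    intro x hx hx'
    exact hne (C_eq hx hx')
  have := measure_iUnion (μ := lam) hd (fun σ => C_meas n σ)
  rw [C_cover n, lam_univ, tsum_fintype] at this
  have h2 : (∑ σ : Fin (n + 1) → ZMod 2, lam (C n σ)).toReal
      = ∑ σ : Fin (n + 1) → ZMod 2, (lam (C n σ)).toReal :=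
    ENNReal.toReal_sum fun σ _ => measure_ne_top _ _
  rw [← h2, ← this]
  simp

end Aux

theorem stmt10 (n : ℕ) (hn : 0 < n) (ε : ℝ) (hε0 : 0 < ε) (hε : ε < 1 / 4)
    (E : Set (Set Cantor)) (hEfin : E.Finite)
    (hEmeas : ∀ A ∈ E, MeasurableSet A) (hEuniv : univ ∈ E)
    (hEcompl : ∀ A ∈ E, Aᶜ ∈ E) (hEunion : ∀ A ∈ E, ∀ B ∈ E, A ∪ B ∈ E)
    (hsplit : ∀ A ∈ E, ∀ V' : Set Cantor, IsAtomOf n V' →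
      (lam (A ∩ V')).toReal ≤ ε * (lam V').toReal / n ∨
      (lam (V' \ A)).toReal ≤ ε * (lam V').toReal / n) :
    tau n ε ∅ = ∅ ∧ tau n ε univ = univ ∧
    (∀ A ∈ E, tau n ε Aᶜ = (tau n ε A)ᶜ) ∧
    (∀ A ∈ E, ∀ B ∈ E, tau n ε (A ∪ B) = tau n ε A ∪ tau n ε B) ∧
    (∀ A ∈ E, MemA n (tau n ε A)) ∧
    (∀ A ∈ E, (lam (symmDiff A (tau n ε A))).toReal ≤ ε / n) := by
  have hn1 : (1 : ℝ) ≤ (n : ℝ) := by exact_mod_cast hn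
  set b : (Fin (n + 1) → ZMod 2) → ℝ :=
    fun σ => ε * (lam (Aux.C n σ)).toReal / n with hb_def
  -- dichotomy for members of E
  have hdi : ∀ A ∈ E, ∀ σ, (lam (A ∩ Aux.C n σ)).toReal ≤ b σ ∨
      (lam (Aux.C n σ \ A)).toReal ≤ b σ := fun A hA σ =>
    hsplit A hA (Aux.C n σ) (Aux.atom_C n σ)
  -- exclusivity
  have hexcl : ∀ (A : Set Cantor), MeasurableSet A → ∀ σ,
      ¬((lam (A ∩ Aux.C n σ)).toReal ≤ b σ ∧ (lam (Aux.C n σ \ A)).toReal ≤ b σ) := by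
    rintro A hA σ ⟨h1, h2⟩
    have hs := Aux.split_add hA (Aux.C n σ)
    have hc := Aux.C_pos n σ
    have h1' : (lam (A ∩ Aux.C n σ)).toReal ≤ ε * (lam (Aux.C n σ)).toReal / n := h1
    have h2' : (lam (Aux.C n σ \ A)).toReal ≤ ε * (lam (Aux.C n σ)).toReal / n := h2
    have hnn : (0 : ℝ) < n := lt_of_lt_of_le one_pos hn1
    have hds : ε * (lam (Aux.C n σ)).toReal / n ≤ ε * (lam (Aux.C n σ)).toReal :=
      div_le_self (mul_pos hε0 hc).le hn1
    nlinarith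
  refine ⟨?_, ?_, ?_, ?_, ?_, ?_⟩
  · -- tau ∅ = ∅
    rw [eq_empty_iff_forall_notMem]
    intro x hx
    obtain ⟨σ, hxσ, h⟩ := Aux.mem_tau.1 hx
    rw [diff_empty] at h
    have hc := Aux.C_pos n σ
    have hnn : (0 : ℝ) < n := lt_of_lt_of_le one_pos hn1
    have hds : ε * (lam (Aux.C n σ)).toReal / n ≤ ε * (lam (Aux.C n σ)).toReal :=
      div_le_self (mul_pos hε0 hc).le hn1
    nlinarith
  · -- tau univ = univ
    refine eq_univ_of_forall fun x => Aux.mem_tau.2 ⟨fun i => x i, Aux.mem_C_self n x, ?_⟩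
    rw [diff_univ, measure_empty]
    have hc := Aux.C_pos n (fun i => (x i : ZMod 2))
    have hnn : (0 : ℝ) < n := lt_of_lt_of_le one_pos hn1
    simp only [ENNReal.toReal_zero]
    positivity
  · -- complements
    intro A hA
    ext x
    constructor
    · intro hx
      obtain ⟨σ, hxσ, h⟩ := Aux.mem_tau.1 hx
      rw [diff_compl, inter_comm] at h
      intro hx'
      obtain ⟨σ', hxσ', h'⟩ := Aux.mem_tau.1 hx'
      rw [Aux.C_eq hxσ' hxσ] at h'
      exact hexcl A (hEmeas A hA) σ ⟨h, h'⟩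
    · intro hx
      set σ : Fin (n + 1) → ZMod 2 := fun i => x i with hσ
      have hnsel : ¬(lam (Aux.C n σ \ A)).toReal ≤ b σ := fun h =>
        hx (Aux.mem_tau.2 ⟨σ, Aux.mem_C_self n x, h⟩)
      have h1 : (lam (A ∩ Aux.C n σ)).toReal ≤ b σ := (hdi A hA σ).resolve_right hnsel
      refine Aux.mem_tau.2 ⟨σ, Aux.mem_C_self n x, ?_⟩
      rwa [diff_compl, inter_comm]
  · -- unions
    intro A hA B hB
    ext x
    constructor
    · intro hx
      obtain ⟨σ, hxσ, h⟩ := Aux.mem_tau.1 hx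
      by_contra hcon
      simp only [mem_union, not_or] at hcon
      obtain ⟨hxA, hxB⟩ := hcon
      have huniq : ∀ (S : Set Cantor), S ∈ E → x ∉ tau n ε S →
          (lam (S ∩ Aux.C n σ)).toReal ≤ b σ := by
        intro S hS hxS
        refine (hdi S hS σ).resolve_right fun hsel => hxS (Aux.mem_tau.2 ⟨σ, hxσ, hsel⟩)
      have h1 := huniq A hA hxA
      have h2 := huniq B hB hxB
      have hsub : ((A ∪ B) ∩ Aux.C n σ) ⊆ (A ∩ Aux.C n σ) ∪ (B ∩ Aux.C n σ) := by
        rw [union_inter_distrib_right]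
      have hle : (lam ((A ∪ B) ∩ Aux.C n σ)).toReal ≤
          (lam (A ∩ Aux.C n σ)).toReal + (lam (B ∩ Aux.C n σ)).toReal := by
        refine le_trans (ENNReal.toReal_mono ?_ ((measure_mono hsub).trans (measure_union_le _ _))) ?_
        · exact ENNReal.add_ne_top.2 ⟨measure_ne_top _ _, measure_ne_top _ _⟩
        · rw [ENNReal.toReal_add (measure_ne_top _ _) (measure_ne_top _ _)]
      have hs := Aux.split_add ((hEmeas A hA).union (hEmeas B hB)) (Aux.C n σ)
      have hc := Aux.C_pos n σ
      have hnn : (0 : ℝ) < n := lt_of_lt_of_le one_pos hn1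
      have h1' : (lam (A ∩ Aux.C n σ)).toReal ≤ ε * (lam (Aux.C n σ)).toReal / n := h1
      have h2' : (lam (B ∩ Aux.C n σ)).toReal ≤ ε * (lam (Aux.C n σ)).toReal / n := h2
      have hds : ε * (lam (Aux.C n σ)).toReal / n ≤ ε * (lam (Aux.C n σ)).toReal :=
        div_le_self (mul_pos hε0 hc).le hn1
      nlinarith
    · intro hx
      have key : ∀ S T : Set Cantor, x ∈ tau n ε S → x ∈ tau n ε (S ∪ T) := by
        intro S T hxS
        obtain ⟨σ, hxσ, h⟩ := Aux.mem_tau.1 hxS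
        refine Aux.mem_tau.2 ⟨σ, hxσ, le_trans ?_ h⟩
        exact ENNReal.toReal_mono (measure_ne_top _ _)
          (measure_mono (diff_subset_diff_right subset_union_left))
      rcases hx with hx | hx
      · exact key A B hx
      · rw [union_comm]; exact key B A hx
  · -- MemA
    intro A _
    refine ⟨{σ | (lam (Aux.C n σ \ A)).toReal ≤ b σ}, ?_⟩
    ext x
    rw [show (x ∈ tau n ε A) ↔ _ from Aux.mem_tau]
    constructor
    · rintro ⟨σ, hxσ, h⟩
      have : σ = fun i : Fin (n + 1) => x i := Aux.C_eq hxσ (Aux.mem_C_self n x)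
      rw [this] at h
      exact h
    · intro h
      exact ⟨fun i => x i, Aux.mem_C_self n x, h⟩
  · -- symmDiff bound
    intro A hA
    set D := symmDiff A (tau n ε A) with hD
    have hDsub : ∀ σ, (lam (D ∩ Aux.C n σ)).toReal ≤ b σ := by
      intro σ
      by_cases hsel : (lam (Aux.C n σ \ A)).toReal ≤ b σ
      · -- selected atom: contained in tau A
        have hsub : D ∩ Aux.C n σ ⊆ Aux.C n σ \ A := by
          rintro x ⟨hxD, hxC⟩
          rw [hD, Set.mem_symmDiff] at hxD
          rcases hxD with ⟨hxA, hxT⟩ | ⟨hxT, hxA⟩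
          · exact absurd (Aux.mem_tau.2 ⟨σ, hxC, hsel⟩) hxT
          · exact ⟨hxC, hxA⟩
        exact le_trans (ENNReal.toReal_mono (measure_ne_top _ _) (measure_mono hsub)) hsel
      · -- non-selected atom: disjoint from tau A
        have h1 : (lam (A ∩ Aux.C n σ)).toReal ≤ b σ := (hdi A hA σ).resolve_right hsel
        have hsub : D ∩ Aux.C n σ ⊆ A ∩ Aux.C n σ := by
          rintro x ⟨hxD, hxC⟩
          rw [hD, Set.mem_symmDiff] at hxD
          rcases hxD with ⟨hxA, _⟩ | ⟨hxT, _⟩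
          · exact ⟨hxA, hxC⟩
          · obtain ⟨σ', hxσ', h'⟩ := Aux.mem_tau.1 hxT
            rw [Aux.C_eq hxσ' hxC] at h'
            exact absurd h' hsel
        exact le_trans (ENNReal.toReal_mono (measure_ne_top _ _) (measure_mono hsub)) h1
    have hcover : D = ⋃ σ : Fin (n + 1) → ZMod 2, (D ∩ Aux.C n σ) := by
      rw [← inter_iUnion, Aux.C_cover n, inter_univ]
    have hle : (lam D).toReal ≤ ∑ σ : Fin (n + 1) → ZMod 2, (lam (D ∩ Aux.C n σ)).toReal := by
      have h1 : lam D ≤ ∑ σ : Fin (n + 1) → ZMod 2, lam (D ∩ Aux.C n σ) := by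
        rw [← tsum_fintype (L := SummationFilter.unconditional _)]
        conv_lhs => rw [hcover]
        exact measure_iUnion_le _
      refine le_trans (ENNReal.toReal_mono ?_ h1) ?_
      · exact (ENNReal.sum_lt_top.2 fun σ _ => measure_lt_top _ _).ne
      · rw [ENNReal.toReal_sum fun σ _ => measure_ne_top _ _]
    have hsum : ∑ σ : Fin (n + 1) → ZMod 2, b σ = ε / n := by
      rw [hb_def]
      simp only [mul_div_assoc]
      rw [← Finset.mul_sum, ← Finset.sum_div, Aux.lam_sum n]
      ring
    calc (lam D).toReal ≤ ∑ σ : Fin (n + 1) → ZMod 2, (lam (D ∩ Aux.C n σ)).toReal := hle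
      _ ≤ ∑ σ : Fin (n + 1) → ZMod 2, b σ := Finset.sum_le_sum fun σ _ => hDsub σ
      _ = ε / n := hsum
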